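/- Let k ≥ 2, let V be a set partitioned into k classes A_1, ..., A_k each of size 2k+3, and let F be any 2-regular simple graph on V each of whose edges joins vertices in different classes (i.e., F is a 2-factor of the complete k-partite graph with parts A_1, ..., A_k). Let H be the hypergraph on V whose edges are all 2-element sets {u,w} with u, w in different classes and {u,w} not an edge of F, together with the k classes A_1, ..., A_k. Then H is a Šoltés hypergraph of diameter 2. -/

import Mathlib

variable {α : Type*} {β : Type*}

/-- A hypergraph: a finite vertex set together with a set of edges,
each an at-least-2-element subset of the vertex set. -/
structure FinHypergraph (α : Type*) where
  verts : Finset α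
  edges : Finset (Finset α)
  edge_sub : ∀ e ∈ edges, e ⊆ verts
  edge_card : ∀ e ∈ edges, 2 ≤ e.card

namespace FinHypergraph

/-- The 2-section graph of a hypergraph: two distinct vertices are adjacent
iff some edge contains both. -/
def twoSection (H : FinHypergraph α) : SimpleGraph α where
  Adj u v := u ≠ v ∧ ∃ e ∈ H.edges, u ∈ e ∧ v ∈ e
  symm := by
    exact ⟨by
    rintro u v ⟨huv, e, he, hu, hv⟩
    exact ⟨huv.symm, e, he, hv, hu⟩⟩
  loopless := by
    exact ⟨by
    rintro u ⟨h, -⟩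
    exact h rfl⟩

/-- Distance between two vertices: graph distance in the 2-section. -/
noncomputable def dist (H : FinHypergraph α) (u v : α) : ℕ :=
  H.twoSection.dist u v

/-- A hypergraph is connected if every two of its vertices are joined by a path. -/
def Connected (H : FinHypergraph α) : Prop :=
  ∀ u ∈ H.verts, ∀ v ∈ H.verts, H.twoSection.Reachable u v

/-- The Wiener index (total distance): the sum of distances over all
unordered pairs of distinct vertices. -/
noncomputable def wiener [DecidableEq α] (H : FinHypergraph α) : ℕ :=
  ∑ p ∈ H.verts.sym2.filter (fun p => ¬ p.IsDiag),
    Sym2.lift ⟨fun u v => H.dist u v, fun _ _ => SimpleGraph.dist_comm⟩ p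

/-- Vertex deletion: remove the vertex and all edges containing it. -/
def delete [DecidableEq α] (H : FinHypergraph α) (v : α) : FinHypergraph α where
  verts := H.verts.erase v
  edges := H.edges.filter fun e => v ∉ e
  edge_sub := by
    intro e he x hx
    rw [Finset.mem_filter] at he
    exact Finset.mem_erase.mpr ⟨fun h => he.2 (h ▸ hx), H.edge_sub e he.1 hx⟩
  edge_card := fun e he => H.edge_card e (Finset.mem_filter.mp he).1

/-- A Šoltés hypergraph: a connected hypergraph on at least 2 vertices such that
deleting any vertex leaves a connected hypergraph with the same Wiener index. -/
def IsSoltes [DecidableEq α] (H : FinHypergraph α) : Prop :=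
  2 ≤ H.verts.card ∧ H.Connected ∧
    ∀ v ∈ H.verts, (H.delete v).Connected ∧ (H.delete v).wiener = H.wiener

/-- The diameter: the maximum distance over unordered pairs of distinct vertices. -/
noncomputable def diam [DecidableEq α] (H : FinHypergraph α) : ℕ :=
  H.verts.offDiag.sup fun p => H.dist p.1 p.2

/-- The degree of a vertex: the number of edges containing it. -/
def degree [DecidableEq α] (H : FinHypergraph α) (v : α) : ℕ :=
  (H.edges.filter fun e => v ∈ e).card

/-- Hypergraph isomorphism: a bijection between the vertex sets mapping
edges onto edges. -/
def IsIsoTo [DecidableEq β] (H : FinHypergraph α) (H' : FinHypergraph β) : Prop :=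
  ∃ f : α → β, Set.InjOn f ↑H.verts ∧ H'.verts = H.verts.image f ∧
    H'.edges = H.edges.image fun e => e.image f

end FinHypergraph


open Finset SimpleGraph in
private lemma sym2_double_aux {α : Type*} [DecidableEq α] (s : Finset α)
    (f : {f : α → α → ℕ // ∀ a b, f a b = f b a}) :
    ∑ p ∈ s.offDiag, f.1 p.1 p.2 =
      2 * ∑ p ∈ s.sym2.filter (fun p => ¬ p.IsDiag), Sym2.lift f p := by
  have hlift : ∀ p : α × α, Sym2.lift f ((Function.uncurry Sym2.mk) p) = f.1 p.1 p.2 := by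
    rintro ⟨a, b⟩; rfl
  have himg : s.offDiag.image (Function.uncurry Sym2.mk) = s.sym2.filter (fun p => ¬ p.IsDiag) := by
    ext z
    induction z with
    | _ a b =>
      simp only [Finset.mem_image, Finset.mem_filter, Finset.mem_sym2_iff]
      constructor
      · rintro ⟨⟨x, y⟩, hxy, hz⟩
        rw [Finset.mem_offDiag] at hxy
        simp only [Function.uncurry_apply_pair] at hz
        rw [Sym2.eq_iff] at hz
        constructor
        · intro c hc
          rw [Sym2.mem_iff] at hc
          rcases hz with ⟨h1, h2⟩ | ⟨h1, h2⟩ <;> rcases hc with rfl | rfl <;>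
            simp_all
        · rw [Sym2.mk_isDiag_iff]
          rcases hz with ⟨h1, h2⟩ | ⟨h1, h2⟩ <;> subst h1 <;> subst h2 <;>
            [exact hxy.2.2; exact fun h => hxy.2.2 h.symm]
      · rintro ⟨hmem, hdiag⟩
        rw [Sym2.mk_isDiag_iff] at hdiag
        refine ⟨(a, b), ?_, rfl⟩
        rw [Finset.mem_offDiag]
        exact ⟨hmem a (by simp), hmem b (by simp), hdiag⟩
  have hfib : ∀ z ∈ s.offDiag.image (Function.uncurry Sym2.mk),
      (s.offDiag.filter fun a => (Function.uncurry Sym2.mk) a = z).card = 2 := by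
    intro z hz
    rcases Finset.mem_image.mp hz with ⟨⟨a, b⟩, hab, rfl⟩
    rw [Finset.mem_offDiag] at hab
    have : (s.offDiag.filter fun p => (Function.uncurry Sym2.mk) p = (Function.uncurry Sym2.mk) (a, b)) = {(a, b), (b, a)} := by
      ext ⟨x, y⟩
      simp only [Finset.mem_filter, Finset.mem_offDiag, Finset.mem_insert,
        Finset.mem_singleton, Prod.mk.injEq]
      constructor
      · rintro ⟨-, hz⟩
        have := Sym2.eq_iff.mp hz
        tauto
      · rintro (⟨rfl, rfl⟩ | ⟨rfl, rfl⟩)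
        · exact ⟨⟨hab.1, hab.2.1, hab.2.2⟩, rfl⟩
        · exact ⟨⟨hab.2.1, hab.1, fun h => hab.2.2 h.symm⟩, Sym2.eq_swap⟩
    rw [this, Finset.card_insert_of_notMem (by simp [Prod.ext_iff]; exact fun h _ => hab.2.2 h),
      Finset.card_singleton]
  calc ∑ p ∈ s.offDiag, f.1 p.1 p.2
      = ∑ p ∈ s.offDiag, Sym2.lift f ((Function.uncurry Sym2.mk) p) := by
        simp only [hlift]
    _ = ∑ z ∈ s.offDiag.image (Function.uncurry Sym2.mk),
          (s.offDiag.filter fun a => (Function.uncurry Sym2.mk) a = z).card • Sym2.lift f z :=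
        Finset.sum_comp _ _
    _ = ∑ z ∈ s.offDiag.image (Function.uncurry Sym2.mk), 2 * Sym2.lift f z := by
        refine Finset.sum_congr rfl fun z hz => ?_
        rw [hfib z hz, smul_eq_mul]
    _ = 2 * ∑ p ∈ s.sym2.filter (fun p => ¬ p.IsDiag), Sym2.lift f p := by
        rw [← Finset.mul_sum, himg]

private lemma dist_eq_two' {α : Type*} {G : SimpleGraph α} {u w : α} (hne : u ≠ w)
    (hna : ¬ G.Adj u w) {x : α} (h1 : G.Adj u x) (h2 : G.Adj x w) :
    G.dist u w = 2 := by
  have hle : G.dist u w ≤ 2 := by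
    have := SimpleGraph.dist_le
      (SimpleGraph.Walk.cons h1 (SimpleGraph.Walk.cons h2 SimpleGraph.Walk.nil))
    simpa using this
  have h0 : G.dist u w ≠ 0 := by
    intro h
    rcases SimpleGraph.dist_eq_zero_iff_eq_or_not_reachable.mp h with h' | h'
    · exact hne h'
    · exact h' (h1.reachable.trans h2.reachable)
  have h1' : G.dist u w ≠ 1 := fun h => hna (SimpleGraph.dist_eq_one_iff_adj.mp h)
  omega

open Finset SimpleGraph in
private lemma count_adj_pairs {α : Type*} [Fintype α] [DecidableEq α] (F : SimpleGraph α)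
    [DecidableRel F.Adj] (s : Finset α) :
    (s.offDiag.filter fun p => F.Adj p.1 p.2).card
      = ∑ u ∈ s, ((F.neighborFinset u) ∩ s).card := by
  have : (s.offDiag.filter fun p => F.Adj p.1 p.2)
      = s.biUnion fun u => ((F.neighborFinset u) ∩ s).image fun w => (u, w) := by
    ext ⟨a, b⟩
    simp only [Finset.mem_filter, Finset.mem_offDiag, Finset.mem_biUnion, Finset.mem_image,
      Finset.mem_inter, SimpleGraph.mem_neighborFinset, Prod.mk.injEq]
    constructor
    · rintro ⟨⟨ha, hb, hne⟩, hadj⟩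
      exact ⟨a, ha, b, ⟨hadj, hb⟩, rfl, rfl⟩
    · rintro ⟨u, hu, w, ⟨hadj, hw⟩, rfl, rfl⟩
      exact ⟨⟨hu, hw, hadj.ne⟩, hadj⟩
  rw [this, Finset.card_biUnion]
  · refine Finset.sum_congr rfl fun u _ => ?_
    rw [Finset.card_image_of_injective _ (fun x y h => by simpa using h)]
  · intro u _ u' _ hne
    simp only [Finset.disjoint_left, Finset.mem_image]
    rintro ⟨a, b⟩ ⟨x, -, rfl, rfl⟩ ⟨y, -, h⟩
    exact hne ((Prod.mk.injEq _ _ _ _ ▸ h).1.symm)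

theorem stmt19 {α : Type*} [Fintype α] [DecidableEq α]
    (k : ℕ) (hk : 2 ≤ k)
    (A : Fin k → Finset α)
    (hdisj : ∀ i j : Fin k, i ≠ j → Disjoint (A i) (A j))
    (hcover : ∀ x : α, ∃ i, x ∈ A i)
    (hsize : ∀ i, (A i).card = 2 * k + 3)
    (F : SimpleGraph α) [DecidableRel F.Adj]
    (hreg : ∀ v : α, F.degree v = 2)
    (hcross : ∀ u w : α, F.Adj u w → ∀ i, ¬(u ∈ A i ∧ w ∈ A i))
    (H : FinHypergraph α)
    (hverts : H.verts = Finset.univ)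
    (hedges : H.edges =
      (((Finset.univ : Finset (α × α)).filter fun p =>
          (∀ i, ¬(p.1 ∈ A i ∧ p.2 ∈ A i)) ∧ ¬ F.Adj p.1 p.2).image
        fun p => ({p.1, p.2} : Finset α))
        ∪ Finset.image A Finset.univ) :
    H.IsSoltes ∧ H.diam = 2 := by
  classical
  choose part hpart using hcover
  have huniq : ∀ (x : α) (i : Fin k), x ∈ A i → i = part x := by
    intro x i hx
    by_contra hne
    exact (Finset.disjoint_left.mp (hdisj i (part x) hne) hx) (hpart x)
  have hdeg : ∀ u : α, (F.neighborFinset u).card = 2 := fun u => hreg u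
  have hcardα : Fintype.card α = k * (2 * k + 3) := by
    have huniv : (Finset.univ : Finset α) = Finset.univ.biUnion A := by
      ext x
      simp only [Finset.mem_biUnion, Finset.mem_univ, true_iff, true_and]
      exact ⟨part x, hpart x⟩
    rw [← Finset.card_univ, huniv,
      Finset.card_biUnion (fun i _ j _ hij => hdisj i j hij)]
    simp only [hsize, Finset.sum_const, Finset.card_univ, Fintype.card_fin, smul_eq_mul]
  have hn14 : 14 ≤ Fintype.card α := by
    rw [hcardα]
    calc 14 = 2 * 7 := rfl
    _ ≤ k * (2 * k + 3) := Nat.mul_le_mul hk (by omega)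
  -- common non-neighbor in the full graph
  have hcn : ∀ u w : α, ∃ x, x ≠ u ∧ x ≠ w ∧ ¬ F.Adj u x ∧ ¬ F.Adj w x := by
    intro u w
    have hbc : (insert u (insert w (F.neighborFinset u ∪ F.neighborFinset w))).card ≤ 6 := by
      calc (insert u (insert w (F.neighborFinset u ∪ F.neighborFinset w))).card
          ≤ (insert w (F.neighborFinset u ∪ F.neighborFinset w)).card + 1 :=
            Finset.card_insert_le _ _
        _ ≤ ((F.neighborFinset u ∪ F.neighborFinset w).card + 1) + 1 :=
            Nat.add_le_add_right (Finset.card_insert_le _ _) 1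
        _ ≤ (((F.neighborFinset u).card + (F.neighborFinset w).card) + 1) + 1 :=
            Nat.add_le_add_right (Nat.add_le_add_right (Finset.card_union_le _ _) 1) 1
        _ ≤ 6 := by rw [hdeg u, hdeg w]
    obtain ⟨x, hx⟩ : ∃ x, x ∉ insert u (insert w (F.neighborFinset u ∪ F.neighborFinset w)) := by
      by_contra h
      push_neg at h
      have hsub : (Finset.univ : Finset α) ⊆
          insert u (insert w (F.neighborFinset u ∪ F.neighborFinset w)) := fun x _ => h x
      have := Finset.card_le_card hsub
      rw [Finset.card_univ] at this
      omega
    simp only [Finset.mem_insert, Finset.mem_union, SimpleGraph.mem_neighborFinset] at hx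
    push_neg at hx
    exact ⟨x, hx.1, hx.2.1, hx.2.2.1, hx.2.2.2⟩
  have hedge_mem : ∀ e, e ∈ H.edges ↔
      (∃ a b : α, (∀ i, ¬(a ∈ A i ∧ b ∈ A i)) ∧ ¬ F.Adj a b ∧ e = ({a, b} : Finset α)) ∨
        ∃ i, e = A i := by
    intro e
    rw [hedges]
    simp only [Finset.mem_union, Finset.mem_image, Finset.mem_filter, Finset.mem_univ, true_and]
    constructor
    · rintro (⟨⟨a, b⟩, ⟨hc, hna⟩, rfl⟩ | ⟨i, rfl⟩)
      · exact Or.inl ⟨a, b, hc, hna, rfl⟩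
      · exact Or.inr ⟨i, rfl⟩
    · rintro (⟨a, b, hc, hna, rfl⟩ | ⟨i, rfl⟩)
      · exact Or.inl ⟨(a, b), ⟨hc, hna⟩, rfl⟩
      · exact Or.inr ⟨i, rfl⟩
  have hAdj : ∀ u w : α, H.twoSection.Adj u w ↔ u ≠ w ∧ ¬ F.Adj u w := by
    intro u w
    constructor
    · rintro ⟨hne, e, he, hu, hw⟩
      refine ⟨hne, ?_⟩
      rcases (hedge_mem e).mp he with ⟨a, b, hc, hna, rfl⟩ | ⟨i, rfl⟩
      · simp only [Finset.mem_insert, Finset.mem_singleton] at hu hw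
        rcases hu with rfl | rfl <;> rcases hw with rfl | rfl
        · exact absurd rfl hne
        · exact hna
        · exact fun h => hna h.symm
        · exact absurd rfl hne
      · exact fun hadj => hcross u w hadj i ⟨hu, hw⟩
    · rintro ⟨hne, hna⟩
      refine ⟨hne, ?_⟩
      by_cases hsp : part u = part w
      · exact ⟨A (part u), (hedge_mem _).mpr (Or.inr ⟨_, rfl⟩), hpart u, hsp ▸ hpart w⟩
      · refine ⟨{u, w}, (hedge_mem _).mpr (Or.inl ⟨u, w, ?_, hna, rfl⟩), by simp, by simp⟩
        rintro i ⟨hui, hwi⟩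
        exact hsp ((huniq u i hui).symm.trans (huniq w i hwi))
  have hdistH : ∀ u w : α, u ≠ w → H.dist u w = if F.Adj u w then 2 else 1 := by
    intro u w hne
    by_cases hadj : F.Adj u w
    · rw [if_pos hadj]
      obtain ⟨x, hxu, hxw, hux, hwx⟩ := hcn u w
      exact dist_eq_two' hne (fun h => ((hAdj u w).mp h).2 hadj)
        ((hAdj u x).mpr ⟨Ne.symm hxu, hux⟩) ((hAdj x w).mpr ⟨hxw, fun h => hwx h.symm⟩)
    · rw [if_neg hadj]
      exact SimpleGraph.dist_eq_one_iff_adj.mpr ((hAdj u w).mpr ⟨hne, hadj⟩)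
  have hconnH : H.Connected := by
    intro u _ w _
    by_cases huw : u = w
    · exact huw ▸ SimpleGraph.Reachable.refl u
    by_cases hadj : F.Adj u w
    · obtain ⟨x, hxu, hxw, hux, hwx⟩ := hcn u w
      exact (SimpleGraph.Adj.reachable ((hAdj u x).mpr ⟨Ne.symm hxu, hux⟩)).trans
        (SimpleGraph.Adj.reachable ((hAdj x w).mpr ⟨hxw, fun h => hwx h.symm⟩))
    · exact SimpleGraph.Adj.reachable ((hAdj u w).mpr ⟨huw, hadj⟩)
  have hWH : 2 * H.wiener =
      (Fintype.card α * Fintype.card α - Fintype.card α) + 2 * Fintype.card α := by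
    have h1 : ∑ p ∈ (Finset.univ : Finset α).offDiag, H.dist p.1 p.2 = 2 * H.wiener := by
      rw [FinHypergraph.wiener, hverts]
      exact sym2_double_aux Finset.univ ⟨fun u v => H.dist u v, fun _ _ => SimpleGraph.dist_comm⟩
    rw [← h1]
    have h2 : ∀ p ∈ (Finset.univ : Finset α).offDiag,
        H.dist p.1 p.2 = (if F.Adj p.1 p.2 then 1 else 0) + 1 := by
      intro p hp
      rw [Finset.mem_offDiag] at hp
      rw [hdistH p.1 p.2 hp.2.2]
      by_cases h : F.Adj p.1 p.2 <;> simp [h]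
    rw [Finset.sum_congr rfl h2, Finset.sum_add_distrib, Finset.sum_boole, Finset.sum_const,
      smul_eq_mul, mul_one, Finset.offDiag_card, Finset.card_univ]
    have h3 : ((Finset.univ : Finset α).offDiag.filter fun p => F.Adj p.1 p.2).card
        = 2 * Fintype.card α := by
      rw [count_adj_pairs]
      rw [Finset.sum_congr rfl (fun u _ => by rw [Finset.inter_univ, hdeg u]),
        Finset.sum_const, Finset.card_univ, smul_eq_mul, mul_comm]
    rw [Nat.cast_id, h3]
    omega
  have hdiam : H.diam = 2 := by
    have hpos : 0 < Fintype.card α := by omega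
    obtain ⟨u⟩ : Nonempty α := Fintype.card_pos_iff.mp hpos
    obtain ⟨w, hw⟩ : (F.neighborFinset u).Nonempty := by
      rw [← Finset.card_pos, hdeg]; omega
    rw [SimpleGraph.mem_neighborFinset] at hw
    have h2 : H.dist u w = 2 := by rw [hdistH u w hw.ne, if_pos hw]
    rw [FinHypergraph.diam]
    refine le_antisymm (Finset.sup_le fun p hp => ?_) ?_
    · rw [hverts, Finset.mem_offDiag] at hp
      rw [hdistH p.1 p.2 hp.2.2]
      split <;> omega
    · have hmem : (u, w) ∈ H.verts.offDiag := by
        rw [hverts, Finset.mem_offDiag]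
        exact ⟨Finset.mem_univ _, Finset.mem_univ _, hw.ne⟩
      exact le_trans (le_of_eq h2.symm)
        (Finset.le_sup (f := fun p : α × α => H.dist p.1 p.2) hmem)
  refine ⟨⟨by rw [hverts, Finset.card_univ]; omega, hconnH, ?_⟩, hdiam⟩
  intro v _
  have hdelverts : (H.delete v).verts = (Finset.univ : Finset α).erase v := by
    show H.verts.erase v = _
    rw [hverts]
  have hdeledges : (H.delete v).edges = H.edges.filter (fun e => v ∉ e) := rfl
  have hAdjD : ∀ u w : α, (H.delete v).twoSection.Adj u w ↔
      u ≠ w ∧ u ≠ v ∧ w ≠ v ∧ ¬ F.Adj u w ∧ ¬(u ∈ A (part v) ∧ w ∈ A (part v)) := by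
    intro u w
    constructor
    · rintro ⟨hne, e, he, hu, hw⟩
      rw [hdeledges, Finset.mem_filter] at he
      obtain ⟨heH, hve⟩ := he
      refine ⟨hne, fun h => hve (h ▸ hu), fun h => hve (h ▸ hw),
        ((hAdj u w).mp ⟨hne, e, heH, hu, hw⟩).2, ?_⟩
      rintro ⟨hupv, hwpv⟩
      rcases (hedge_mem e).mp heH with ⟨a, b, hc, -, rfl⟩ | ⟨i, rfl⟩
      · simp only [Finset.mem_insert, Finset.mem_singleton] at hu hw
        rcases hu with rfl | rfl <;> rcases hw with rfl | rfl
        · exact hne rfl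
        · exact hc (part v) ⟨hupv, hwpv⟩
        · exact hc (part v) ⟨hwpv, hupv⟩
        · exact hne rfl
      · have h1 : i = part u := huniq u i hu
        have h2 : part v = part u := huniq u (part v) hupv
        exact hve (by rw [h1, ← h2]; exact hpart v)
    · rintro ⟨hne, huv, hwv, hna, hsp⟩
      by_cases hp : part u = part w
      · have hipv : part u ≠ part v := by
          intro h
          exact hsp ⟨h ▸ hpart u, (hp ▸ h : part w = part v) ▸ hpart w⟩
        refine ⟨hne, A (part u), ?_, hpart u, hp ▸ hpart w⟩
        rw [hdeledges, Finset.mem_filter]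
        exact ⟨(hedge_mem _).mpr (Or.inr ⟨_, rfl⟩), fun hvm => hipv (huniq v _ hvm)⟩
      · refine ⟨hne, {u, w}, ?_, by simp, by simp⟩
        rw [hdeledges, Finset.mem_filter]
        refine ⟨(hedge_mem _).mpr (Or.inl ⟨u, w, ?_, hna, rfl⟩), ?_⟩
        · rintro i ⟨hui, hwi⟩
          exact hp ((huniq u i hui).symm.trans (huniq w i hwi))
        · simp only [Finset.mem_insert, Finset.mem_singleton]
          rintro (rfl | rfl)
          · exact huv rfl
          · exact hwv rfl
  have hkey : ∀ u w : α, u ≠ v → w ≠ v → F.Adj u w → v ∉ A (part u) →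
      ∃ x, (H.delete v).twoSection.Adj u x ∧ (H.delete v).twoSection.Adj x w := by
    intro u w huv hwv hadj hvA
    have hpuw : part u ≠ part w := by
      intro h
      exact hcross u w hadj (part u) ⟨hpart u, h ▸ hpart w⟩
    obtain ⟨x, hx⟩ : (A (part u) \ insert u (F.neighborFinset w)).Nonempty := by
      rw [← Finset.card_pos]
      have h1 := Finset.card_insert_le u (F.neighborFinset w)
      rw [hdeg w] at h1
      have h2 := Finset.le_card_sdiff (insert u (F.neighborFinset w)) (A (part u))
      rw [hsize] at h2
      omega
    rw [Finset.mem_sdiff, Finset.mem_insert] at hx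
    push_neg at hx
    obtain ⟨hxA, hxu, hxw⟩ := hx
    rw [SimpleGraph.mem_neighborFinset] at hxw
    have hxv : x ≠ v := fun h => hvA (h ▸ hxA)
    refine ⟨x, ?_, ?_⟩
    · rw [hAdjD]
      refine ⟨fun h => hxu h.symm, huv, hxv,
        fun h => hcross u x h (part u) ⟨hpart u, hxA⟩, ?_⟩
      rintro ⟨h1, -⟩
      exact hvA ((huniq u (part v) h1) ▸ hpart v)
    · rw [hAdjD]
      refine ⟨?_, hxv, hwv, fun h => hxw h.symm, ?_⟩
      · intro h
        exact hpuw (huniq w (part u) (h ▸ hxA))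
      · rintro ⟨h1, -⟩
        have h2 : part v = part x := huniq x (part v) h1
        have h3 : part u = part x := huniq x (part u) hxA
        exact hvA ((h2.trans h3.symm) ▸ hpart v)
  have hchain : ∀ u w : α, u ≠ v → w ≠ v → u ≠ w → ¬ (H.delete v).twoSection.Adj u w →
      ∃ x, (H.delete v).twoSection.Adj u x ∧ (H.delete v).twoSection.Adj x w := by
    intro u w huv hwv huw hna
    rw [hAdjD] at hna
    push_neg at hna
    by_cases hadj : F.Adj u w
    · by_cases hvu : v ∈ A (part u)
      · have hvw : v ∉ A (part w) := by
          intro h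
          have h1 : part u = part v := huniq v (part u) hvu
          have h2 : part w = part v := huniq v (part w) h
          exact hcross u w hadj (part u) ⟨hpart u, (h1.trans h2.symm) ▸ hpart w⟩
        obtain ⟨x, h1, h2⟩ := hkey w u hwv huv hadj.symm hvw
        exact ⟨x, h2.symm, h1.symm⟩
      · exact hkey u w huv hwv hadj hvu
    · have hboth := hna huw huv hwv hadj
      obtain ⟨j, hj⟩ := Fintype.exists_ne_of_one_lt_card
        (by rw [Fintype.card_fin]; omega) (part v)
      obtain ⟨x, hx⟩ : (A j \ (F.neighborFinset u ∪ F.neighborFinset w)).Nonempty := by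
        rw [← Finset.card_pos]
        have h1 := Finset.card_union_le (F.neighborFinset u) (F.neighborFinset w)
        rw [hdeg u, hdeg w] at h1
        have h2 := Finset.le_card_sdiff (F.neighborFinset u ∪ F.neighborFinset w) (A j)
        rw [hsize] at h2
        omega
      rw [Finset.mem_sdiff, Finset.mem_union] at hx
      push_neg at hx
      obtain ⟨hxA, hxu, hxw⟩ := hx
      rw [SimpleGraph.mem_neighborFinset] at hxu hxw
      have hxnotpv : x ∉ A (part v) := by
        intro h
        exact hj ((huniq x j hxA).trans (huniq x (part v) h).symm)
      have hxv : x ≠ v := fun h => hxnotpv (by rw [h]; exact hpart v)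
      refine ⟨x, ?_, ?_⟩
      · rw [hAdjD]
        exact ⟨fun h => hxnotpv (h ▸ hboth.1), huv, hxv, hxu, fun hp => hxnotpv hp.2⟩
      · rw [hAdjD]
        exact ⟨fun h => hxnotpv (h.symm ▸ hboth.2), hxv, hwv, fun h => hxw h.symm,
          fun hp => hxnotpv hp.1⟩
  have hdistD : ∀ u w : α, u ≠ v → w ≠ v → u ≠ w →
      (H.delete v).dist u w
        = if (F.Adj u w ∨ (u ∈ A (part v) ∧ w ∈ A (part v))) then 2 else 1 := by
    intro u w huv hwv huw
    by_cases hadj : (H.delete v).twoSection.Adj u w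
    · have h := (hAdjD u w).mp hadj
      rw [if_neg (by tauto)]
      exact SimpleGraph.dist_eq_one_iff_adj.mpr hadj
    · obtain ⟨x, h1, h2⟩ := hchain u w huv hwv huw hadj
      have hpred : F.Adj u w ∨ (u ∈ A (part v) ∧ w ∈ A (part v)) := by
        by_contra hno
        push_neg at hno
        exact hadj ((hAdjD u w).mpr ⟨huw, huv, hwv, hno.1, fun hp => hno.2 hp.1 hp.2⟩)
      rw [if_pos hpred]
      exact dist_eq_two' huw hadj h1 h2
  constructor
  · -- connectivity of the deletion
    intro u hu w hw
    rw [hdelverts, Finset.mem_erase] at hu hw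
    by_cases huw : u = w
    · exact huw ▸ SimpleGraph.Reachable.refl u
    by_cases hadj : (H.delete v).twoSection.Adj u w
    · exact hadj.reachable
    · obtain ⟨x, h1, h2⟩ := hchain u w hu.1 hw.1 huw hadj
      exact h1.reachable.trans h2.reachable
  · -- the Wiener index is unchanged
    have h1 : ∑ p ∈ ((Finset.univ : Finset α).erase v).offDiag, (H.delete v).dist p.1 p.2
        = 2 * (H.delete v).wiener := by
      rw [FinHypergraph.wiener, hdelverts]
      exact sym2_double_aux ((Finset.univ : Finset α).erase v)
        ⟨fun u w => (H.delete v).dist u w, fun _ _ => SimpleGraph.dist_comm⟩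
    have h2 : ∀ p ∈ ((Finset.univ : Finset α).erase v).offDiag,
        (H.delete v).dist p.1 p.2 =
          (if (F.Adj p.1 p.2 ∨ (p.1 ∈ A (part v) ∧ p.2 ∈ A (part v))) then 1 else 0) + 1 := by
      intro p hp
      rw [Finset.mem_offDiag, Finset.mem_erase, Finset.mem_erase] at hp
      rw [hdistD p.1 p.2 hp.1.1 hp.2.1.1 hp.2.2]
      split <;> rfl
    have hsplit : (((Finset.univ : Finset α).erase v).offDiag.filter
        fun p => F.Adj p.1 p.2 ∨ (p.1 ∈ A (part v) ∧ p.2 ∈ A (part v))).card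
        = (((Finset.univ : Finset α).erase v).offDiag.filter fun p => F.Adj p.1 p.2).card
          + (((Finset.univ : Finset α).erase v).offDiag.filter
              fun p => p.1 ∈ A (part v) ∧ p.2 ∈ A (part v)).card := by
      rw [Finset.filter_or, Finset.card_union_of_disjoint]
      rw [Finset.disjoint_filter]
      rintro p _ hadj ⟨h1, h2⟩
      exact hcross p.1 p.2 hadj (part v) ⟨h1, h2⟩
    have hE2 : (((Finset.univ : Finset α).erase v).offDiag.filter
        fun p => F.Adj p.1 p.2).card + 2 = 2 * ((Finset.univ : Finset α).erase v).card := by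
      rw [count_adj_pairs]
      have hpoint : ∀ u ∈ (Finset.univ : Finset α).erase v,
          (F.neighborFinset u ∩ (Finset.univ : Finset α).erase v).card
            + (if F.Adj u v then 1 else 0) = 2 := by
        intro u hu
        have hinter : F.neighborFinset u ∩ (Finset.univ : Finset α).erase v
            = (F.neighborFinset u).erase v := by
          ext y
          simp only [Finset.mem_inter, Finset.mem_erase, Finset.mem_univ, and_true,
            SimpleGraph.mem_neighborFinset]
          tauto
        rw [hinter]
        by_cases hav : F.Adj u v
        · rw [if_pos hav,
            Finset.card_erase_of_mem (by rwa [SimpleGraph.mem_neighborFinset]), hdeg]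
        · rw [if_neg hav,
            Finset.erase_eq_of_notMem (by rwa [SimpleGraph.mem_neighborFinset]), hdeg]
      have hsum : (∑ u ∈ (Finset.univ : Finset α).erase v,
            (F.neighborFinset u ∩ (Finset.univ : Finset α).erase v).card)
          + (∑ u ∈ (Finset.univ : Finset α).erase v, (if F.Adj u v then 1 else 0))
          = 2 * ((Finset.univ : Finset α).erase v).card := by
        rw [← Finset.sum_add_distrib, Finset.sum_congr rfl hpoint, Finset.sum_const,
          smul_eq_mul, mul_comm]
      have hflt : (∑ u ∈ (Finset.univ : Finset α).erase v, (if F.Adj u v then 1 else 0))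
          = 2 := by
        rw [Finset.sum_boole, Nat.cast_id]
        have heq : ((Finset.univ : Finset α).erase v).filter (fun u => F.Adj u v)
            = F.neighborFinset v := by
          ext u
          simp only [Finset.mem_filter, Finset.mem_erase, Finset.mem_univ, and_true,
            SimpleGraph.mem_neighborFinset]
          constructor
          · rintro ⟨-, h⟩
            exact h.symm
          · intro h
            exact ⟨Ne.symm h.ne, h.symm⟩
        rw [heq, hdeg]
      rw [hflt] at hsum
      exact hsum
    have hSame : (((Finset.univ : Finset α).erase v).offDiag.filter
        fun p => p.1 ∈ A (part v) ∧ p.2 ∈ A (part v)) = ((A (part v)).erase v).offDiag := by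
      ext p
      simp only [Finset.mem_filter, Finset.mem_offDiag, Finset.mem_erase, Finset.mem_univ,
        and_true]
      tauto
    have hM : ((A (part v)).erase v).card = 2 * k + 2 := by
      rw [Finset.card_erase_of_mem (hpart v), hsize]
      omega
    have hNcard : ((Finset.univ : Finset α).erase v).card + 1 = Fintype.card α := by
      rw [Finset.card_erase_of_mem (Finset.mem_univ v), Finset.card_univ]
      omega
    have h2W : 2 * (H.delete v).wiener =
        (((Finset.univ : Finset α).erase v).card * ((Finset.univ : Finset α).erase v).card
          - ((Finset.univ : Finset α).erase v).card)
        + ((((Finset.univ : Finset α).erase v).offDiag.filter fun p => F.Adj p.1 p.2).card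
          + ((2 * k + 2) * (2 * k + 2) - (2 * k + 2))) := by
      rw [← h1, Finset.sum_congr rfl h2, Finset.sum_add_distrib, Finset.sum_boole, Nat.cast_id,
        Finset.sum_const, smul_eq_mul, mul_one, Finset.offDiag_card, hsplit, hSame,
        Finset.offDiag_card, hM]
      generalize ((Finset.univ : Finset α).erase v).card
          * ((Finset.univ : Finset α).erase v).card = q1
      generalize (2 * k + 2) * (2 * k + 2) = q2
      omega
    -- final arithmetic
    set N := ((Finset.univ : Finset α).erase v).card with hNdef
    set E := (((Finset.univ : Finset α).erase v).offDiag.filter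
      fun p => F.Adj p.1 p.2).card with hEdef
    have hfinal : 2 * (H.delete v).wiener = 2 * H.wiener := by
      rw [h2W, hWH]
      have hNpos : 0 < N := by omega
      have c1 : N ≤ N * N := Nat.le_mul_of_pos_left N hNpos
      have c2 : (2 * k + 2) ≤ (2 * k + 2) * (2 * k + 2) :=
        Nat.le_mul_of_pos_left _ (by omega)
      have c3 : Fintype.card α ≤ Fintype.card α * Fintype.card α :=
        Nat.le_mul_of_pos_left _ (by omega)
      zify [c1, c2, c3]
      have hE2' : (E : ℤ) + 2 = 2 * N := by exact_mod_cast hE2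
      have hNcard' : (N : ℤ) + 1 = Fintype.card α := by exact_mod_cast hNcard
      have hcardα' : (Fintype.card α : ℤ) = k * (2 * k + 3) := by exact_mod_cast hcardα
      linear_combination hE2' + ((N : ℤ) + Fintype.card α) * hNcard' - 2 * hcardα'
    omega
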